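/- Let n ≥ 1 and let K ⊂ ℝⁿ be a compact convex body with nonempty interior whose support function satisfies h_K(ξ)² = P(ξ) for all ξ ∈ ℝⁿ, where P is a homogeneous quadratic polynomial on ℝⁿ. Then K is an origin-symmetric ellipsoid, i.e., K is the image of the closed unit ball under an invertible linear map. -/

import Mathlib

open MeasureTheory

/-- The support function of `K`. -/
noncomputable def suppFun {n : ℕ} (K : Set (EuclideanSpace ℝ (Fin n)))
    (ξ : EuclideanSpace ℝ (Fin n)) : ℝ :=
  sSup ((fun x => (inner ℝ x ξ : ℝ)) '' K)

open Matrix MvPolynomial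

section Aux

lemma aux_deg_two {n : ℕ} (d : Fin n →₀ ℕ) (hd : d.degree = 2) :
    ∃ a b : Fin n, d = Finsupp.single a 1 + Finsupp.single b 1 := by
  have hcard : Multiset.card d.toMultiset = 2 := by
    rw [Finsupp.card_toMultiset]
    simpa [Finsupp.sum] using (Finsupp.degree_apply d).symm.trans hd
  obtain ⟨a, b, hab⟩ := Multiset.card_eq_two.mp hcard
  rw [Finsupp.toMultiset_eq_iff] at hab
  refine ⟨a, b, ?_⟩
  rw [hab]
  have h2 : ({a, b} : Multiset (Fin n)) = {a} + {b} := rfl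
  rw [h2, Multiset.toFinsupp_add, Multiset.toFinsupp_singleton, Multiset.toFinsupp_singleton]

lemma aux_transpose_stdBasisMatrix {n : ℕ} (a b : Fin n) (c : ℝ) :
    (Matrix.single a b c)ᵀ = Matrix.single b a c := by
  ext i j
  simp [Matrix.single, Matrix.transpose_apply, and_comm]

lemma aux_monomial_rep {n : ℕ} (d : Fin n →₀ ℕ) (c : ℝ) (hd : d.degree = 2) :
    ∃ M : Matrix (Fin n) (Fin n) ℝ, Mᵀ = M ∧
      ∀ x : Fin n → ℝ, MvPolynomial.eval x (MvPolynomial.monomial d c) = x ⬝ᵥ M *ᵥ x := by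
  obtain ⟨a, b, rfl⟩ := aux_deg_two d hd
  have h1 : ∀ (i j : Fin n) (t : ℝ) (x : Fin n → ℝ),
      x ⬝ᵥ (Matrix.single i j t) *ᵥ x = t * (x i * x j) := by
    intro i j t x
    rw [Matrix.single_mulVec]
    rw [show Function.update (0 : Fin n → ℝ) i (t * x j) = Pi.single i (t * x j) from rfl]
    rw [dotProduct_single]
    ring
  refine ⟨Matrix.single a b (c/2) + Matrix.single b a (c/2), ?_, fun x => ?_⟩
  · rw [Matrix.transpose_add, aux_transpose_stdBasisMatrix, aux_transpose_stdBasisMatrix, add_comm]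
  · rw [Matrix.add_mulVec, dotProduct_add, h1, h1, MvPolynomial.eval_monomial]
    rw [Finsupp.prod_add_index (by simp) (by intros; rw [pow_add])]
    rw [Finsupp.prod_single_index (by simp), Finsupp.prod_single_index (by simp)]
    ring

lemma aux_quad_rep {n : ℕ} (P : MvPolynomial (Fin n) ℝ) (hP : P.IsHomogeneous 2) :
    ∃ M : Matrix (Fin n) (Fin n) ℝ, Mᵀ = M ∧
      ∀ x : Fin n → ℝ, MvPolynomial.eval x P = x ⬝ᵥ M *ᵥ x := by
  classical
  have hdeg : ∀ d ∈ P.support, d.degree = 2 := by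
    intro d hd
    by_contra h
    exact (MvPolynomial.mem_support_iff.mp hd) (hP.coeff_eq_zero h)
  set F : (Fin n →₀ ℕ) → Matrix (Fin n) (Fin n) ℝ := fun d =>
    if h : d.degree = 2 then Classical.choose (aux_monomial_rep d (MvPolynomial.coeff d P) h)
    else 0 with hF
  refine ⟨∑ d ∈ P.support, F d, ?_, fun x => ?_⟩
  · rw [Matrix.transpose_sum]
    refine Finset.sum_congr rfl fun d hd => ?_
    rw [hF]; simp only [hdeg d hd, dif_pos]
    exact (Classical.choose_spec (aux_monomial_rep d (MvPolynomial.coeff d P) (hdeg d hd))).1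
  · conv_lhs => rw [← MvPolynomial.support_sum_monomial_coeff P]
    have hsum : (∑ d ∈ P.support, F d) *ᵥ x = ∑ d ∈ P.support, F d *ᵥ x := by
      rw [← Matrix.toLin'_apply, map_sum, LinearMap.sum_apply]
      simp [Matrix.toLin'_apply]
    have hsum2 : x ⬝ᵥ ∑ d ∈ P.support, F d *ᵥ x = ∑ d ∈ P.support, x ⬝ᵥ F d *ᵥ x := by
      simp only [dotProduct, Finset.sum_apply, Finset.mul_sum]
      exact Finset.sum_comm
    rw [map_sum, hsum, hsum2]
    refine Finset.sum_congr rfl fun d hd => ?_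
    have h2 := hdeg d hd
    have := (Classical.choose_spec (aux_monomial_rep d (MvPolynomial.coeff d P) h2)).2 x
    rw [this, hF]; simp only [h2, dif_pos]

variable {n : ℕ} {K : Set (EuclideanSpace ℝ (Fin n))}

lemma aux_suppFun_bdd (hK : IsCompact K) (ξ : EuclideanSpace ℝ (Fin n)) :
    BddAbove ((fun x => (inner ℝ x ξ : ℝ)) '' K) :=
  (hK.image (continuous_id.inner continuous_const)).bddAbove

lemma aux_le_suppFun (hK : IsCompact K) {x} (hx : x ∈ K) (ξ : EuclideanSpace ℝ (Fin n)) :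
    (inner ℝ x ξ : ℝ) ≤ suppFun K ξ :=
  le_csSup (aux_suppFun_bdd hK ξ) ⟨x, hx, rfl⟩

lemma aux_suppFun_le (hne : K.Nonempty) {ξ : EuclideanSpace ℝ (Fin n)} {c : ℝ}
    (h : ∀ y ∈ K, (inner ℝ y ξ : ℝ) ≤ c) : suppFun K ξ ≤ c :=
  csSup_le (hne.image _) (by rintro _ ⟨y, hy, rfl⟩; exact h y hy)

lemma aux_mem_of_inner_le_suppFun (hconv : Convex ℝ K) (hcl : IsClosed K) (hne : K.Nonempty)
    {x : EuclideanSpace ℝ (Fin n)}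
    (h : ∀ ξ, (inner ℝ x ξ : ℝ) ≤ suppFun K ξ) : x ∈ K := by
  by_contra hx
  obtain ⟨f, u, hfu, hux⟩ := geometric_hahn_banach_closed_point hconv hcl hx
  set ξ := (InnerProductSpace.toDual ℝ (EuclideanSpace ℝ (Fin n))).symm f with hξ
  have hf : ∀ y : EuclideanSpace ℝ (Fin n), f y = (inner ℝ y ξ : ℝ) := by
    intro y
    have : (InnerProductSpace.toDual ℝ (EuclideanSpace ℝ (Fin n))) ξ = f :=
      (InnerProductSpace.toDual ℝ _).apply_symm_apply f
    rw [← this, InnerProductSpace.toDual_apply_apply, real_inner_comm]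
  have h1 : suppFun K ξ ≤ u := aux_suppFun_le hne fun y hy => by
    rw [← hf y]; exact (hfu y hy).le
  have h2 := h ξ
  rw [← hf x] at h2
  linarith

lemma aux_inner_eq_dot (u v : EuclideanSpace ℝ (Fin n)) :
    (inner ℝ u v : ℝ) = (fun i => u i) ⬝ᵥ (fun i => v i) := by
  simp [PiLp.inner_apply, RCLike.inner_apply, dotProduct, mul_comm]

lemma aux_adj_eq (A : Matrix (Fin n) (Fin n) ℝ) (hA : Aᵀ = A)
    (y ξ : EuclideanSpace ℝ (Fin n)) :
    (inner ℝ (Matrix.toEuclideanLin A y) ξ : ℝ) = inner ℝ y (Matrix.toEuclideanLin A ξ) := by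
  rw [aux_inner_eq_dot, aux_inner_eq_dot]
  show (A *ᵥ (fun i => y i)) ⬝ᵥ (fun i => ξ i) = (fun i => y i) ⬝ᵥ (A *ᵥ fun i => ξ i)
  rw [Matrix.dotProduct_mulVec, ← Matrix.mulVec_transpose, hA]

lemma aux_suppFun_ellipsoid (A : Matrix (Fin n) (Fin n) ℝ) (hA : Aᵀ = A)
    (ξ : EuclideanSpace ℝ (Fin n)) :
    suppFun (Matrix.toEuclideanLin A '' Metric.closedBall 0 1) ξ
      = ‖Matrix.toEuclideanLin A ξ‖ := by
  classical
  set L := Matrix.toEuclideanLin A with hL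
  set w := L ξ with hw
  have hadj : ∀ y η : EuclideanSpace ℝ (Fin n), (inner ℝ (L y) η : ℝ) = inner ℝ y (L η) :=
    fun y η => aux_adj_eq A hA y η
  have key : IsGreatest ((fun x => (inner ℝ x ξ : ℝ)) '' (L '' Metric.closedBall 0 1)) ‖w‖ := by
    constructor
    · refine ⟨L (if h : w = 0 then 0 else ‖w‖⁻¹ • w), ⟨_, ?_, rfl⟩, ?_⟩
      · split_ifs with h
        · simp [Metric.mem_closedBall]
        · simp only [mem_closedBall_zero_iff, norm_smul, norm_inv, norm_norm]
          rw [inv_mul_cancel₀ (norm_ne_zero_iff.mpr h)]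
      · simp only
        rw [hadj, ← hw]
        split_ifs with h
        · simp [h]
        · rw [real_inner_smul_left, real_inner_self_eq_norm_sq]
          field_simp [norm_ne_zero_iff.mpr h]
    · rintro _ ⟨_, ⟨y, hy, rfl⟩, rfl⟩
      simp only
      rw [hadj, ← hw]
      calc (inner ℝ y w : ℝ) ≤ ‖y‖ * ‖w‖ := real_inner_le_norm y w
        _ ≤ 1 * ‖w‖ := by
            have := mem_closedBall_zero_iff.mp hy
            exact mul_le_mul_of_nonneg_right this (norm_nonneg w)
        _ = ‖w‖ := one_mul _
  exact key.csSup_eq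

end Aux

open scoped MatrixOrder

theorem ellipsoid_of_quadratic_support_function_squared
    {n : ℕ} (hn : 1 ≤ n) (K : Set (EuclideanSpace ℝ (Fin n)))
    (hKcpt : IsCompact K) (hKconv : Convex ℝ K) (hKint : (interior K).Nonempty)
    (P : MvPolynomial (Fin n) ℝ) (hP : P.IsHomogeneous 2)
    (hsupp : ∀ ξ : EuclideanSpace ℝ (Fin n),
      (suppFun K ξ) ^ 2 = MvPolynomial.eval (fun i => ξ i) P) :
    ∃ L : EuclideanSpace ℝ (Fin n) →ₗ[ℝ] EuclideanSpace ℝ (Fin n),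
      Function.Bijective L ∧ K = L '' Metric.closedBall 0 1 := by
  classical
  obtain ⟨M, hMsymm, hMeval⟩ := aux_quad_rep P hP
  obtain ⟨x₀, hx₀⟩ := hKint
  have hx₀K : x₀ ∈ K := interior_subset hx₀
  have hKne : K.Nonempty := ⟨x₀, hx₀K⟩
  -- interior ball
  obtain ⟨r, hr, hball⟩ := Metric.mem_nhds_iff.mp (mem_interior_iff_mem_nhds.mp hx₀)
  -- lower bound on support function
  have hlow : ∀ ξ : EuclideanSpace ℝ (Fin n), ξ ≠ 0 →
      (inner ℝ x₀ ξ : ℝ) + (r/2) * ‖ξ‖ ≤ suppFun K ξ := by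
    intro ξ hξ
    have hξn : (0:ℝ) < ‖ξ‖ := norm_pos_iff.mpr hξ
    set y : EuclideanSpace ℝ (Fin n) := x₀ + ((r/2) * ‖ξ‖⁻¹) • ξ with hy
    have hyK : y ∈ K := by
      apply hball
      rw [Metric.mem_ball, dist_eq_norm, hy]
      have : x₀ + ((r/2) * ‖ξ‖⁻¹) • ξ - x₀ = ((r/2) * ‖ξ‖⁻¹) • ξ := by abel
      rw [this, norm_smul]
      rw [Real.norm_of_nonneg (by positivity)]
      rw [mul_assoc, inv_mul_cancel₀ hξn.ne', mul_one]
      linarith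
    have := aux_le_suppFun hKcpt hyK ξ
    rw [hy, inner_add_left, real_inner_smul_left, real_inner_self_eq_norm_sq] at this
    calc (inner ℝ x₀ ξ : ℝ) + (r/2) * ‖ξ‖
        = inner ℝ x₀ ξ + (r/2) * ‖ξ‖⁻¹ * (‖ξ‖^2) := by
          field_simp
      _ ≤ suppFun K ξ := this
  -- evenness of the quadratic form
  have hQeven : ∀ ξ : EuclideanSpace ℝ (Fin n),
      MvPolynomial.eval (fun i => (-ξ) i) P = MvPolynomial.eval (fun i => ξ i) P := by
    intro ξ
    rw [hMeval, hMeval]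
    have : (fun i => (-ξ) i) = -(fun i => ξ i) := rfl
    rw [this, Matrix.mulVec_neg, dotProduct_neg, neg_dotProduct, neg_neg]
  -- positivity of support function
  have hpos : ∀ ξ : EuclideanSpace ℝ (Fin n), ξ ≠ 0 → 0 < suppFun K ξ := by
    intro ξ hξ
    have hξn : (0:ℝ) < ‖ξ‖ := norm_pos_iff.mpr hξ
    have h1 := hlow ξ hξ
    have h2 := hlow (-ξ) (neg_ne_zero.mpr hξ)
    rw [inner_neg_right, norm_neg] at h2
    have hsq : suppFun K ξ ^ 2 = suppFun K (-ξ) ^ 2 := by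
      rw [hsupp, hsupp, hQeven]
    have hrx : 0 < r/2 * ‖ξ‖ := by positivity
    have hsum : 0 < suppFun K ξ + suppFun K (-ξ) := by nlinarith [real_inner_self_nonneg (x := ξ)]
    nlinarith [hsq, hsum]
  have hnonneg : ∀ ξ : EuclideanSpace ℝ (Fin n), 0 ≤ suppFun K ξ := by
    intro ξ
    by_cases hξ : ξ = 0
    · subst hξ
      have : suppFun K 0 ≤ 0 := aux_suppFun_le hKne fun y _ => by simp
      have h0 : (inner ℝ x₀ (0 : EuclideanSpace ℝ (Fin n)) : ℝ) ≤ suppFun K 0 :=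
        aux_le_suppFun hKcpt hx₀K 0
      simp at h0
      linarith
    · exact (hpos ξ hξ).le
  -- M is positive definite
  have hMherm : M.IsHermitian := by
    rw [Matrix.IsHermitian, Matrix.conjTranspose]
    simpa [show (⇑(starRingEnd ℝ)) = id from funext fun _ => rfl, Matrix.map_id] using hMsymm
  have hMpd : M.PosDef := by
    refine Matrix.PosDef.of_dotProduct_mulVec_pos hMherm fun x hx => ?_
    set ξ : EuclideanSpace ℝ (Fin n) := (WithLp.equiv 2 _).symm x with hξdef
    have hξ : ξ ≠ 0 := by
      simpa [hξdef] using hx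
    have : (0:ℝ) < suppFun K ξ := hpos ξ hξ
    have heq : MvPolynomial.eval (fun i => ξ i) P = x ⬝ᵥ M *ᵥ x := hMeval x
    have := hsupp ξ
    have hstar : (star x : Fin n → ℝ) = x := by simp
    rw [hstar]
    nlinarith [hpos ξ hξ, (hsupp ξ).trans heq]
  -- square root
  have hMpsd : M.PosSemidef := hMpd.posSemidef
  set A := CFC.sqrt M with hA
  have hAps : A.PosSemidef := (CFC.sqrt_nonneg M).posSemidef
  have hAsymm : Aᵀ = A := by
    have := hAps.1
    rwa [Matrix.IsHermitian, Matrix.conjTranspose, show (star : ℝ → ℝ) = id from rfl,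
      Matrix.map_id] at this
  have hAA : A * A = M := CFC.sqrt_mul_sqrt_self M hMpsd.nonneg
  set L := Matrix.toEuclideanLin A with hLdef
  -- norm computation
  have hnormsq : ∀ ξ : EuclideanSpace ℝ (Fin n),
      ‖L ξ‖ ^ 2 = MvPolynomial.eval (fun i => ξ i) P := by
    intro ξ
    have h1 : ‖L ξ‖ ^ 2 = (inner ℝ (L ξ) (L ξ) : ℝ) := (real_inner_self_eq_norm_sq _).symm
    rw [h1, aux_inner_eq_dot]
    show (A *ᵥ (fun i => ξ i)) ⬝ᵥ (A *ᵥ (fun i => ξ i))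
      = MvPolynomial.eval (fun i => ξ i) P
    rw [Matrix.dotProduct_mulVec, ← Matrix.mulVec_transpose, hAsymm, Matrix.mulVec_mulVec, hAA,
      dotProduct_comm, hMeval]
  -- injectivity
  have hLinj : Function.Injective L := by
    rw [injective_iff_map_eq_zero]
    intro y hy
    by_contra hy0
    have hyfun : (fun i => y i) ≠ 0 := by
      intro hc
      apply hy0
      ext i
      exact congrFun hc i
    have := hMpd.dotProduct_mulVec_pos hyfun
    have hstar : (star (fun i => y i) : Fin n → ℝ) = fun i => y i := by simp
    rw [hstar] at this
    have hMy : M *ᵥ (fun i => y i) = A *ᵥ (A *ᵥ (fun i => y i)) := by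
      rw [Matrix.mulVec_mulVec, hAA]
    have hAy : A *ᵥ (fun i => y i) = 0 := by
      have : ∀ i, (L y) i = 0 := fun i => by rw [hy]; rfl
      funext i
      exact this i
    rw [hMy, hAy, Matrix.mulVec_zero, dotProduct_zero] at this
    exact lt_irrefl 0 this
  have hLbij : Function.Bijective L :=
    ⟨hLinj, (LinearMap.injective_iff_surjective).mp hLinj⟩
  -- the ellipsoid
  set Eset := L '' Metric.closedBall 0 1 with hEdef
  have hEcpt : IsCompact Eset :=
    (isCompact_closedBall 0 1).image L.continuous_of_finiteDimensional
  have hEconv : Convex ℝ Eset := (convex_closedBall _ _).linear_image L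
  have hEne : Eset.Nonempty := ⟨L 0, Set.mem_image_of_mem _ (by simp)⟩
  -- equality of support functions
  have hsame : ∀ ξ : EuclideanSpace ℝ (Fin n), suppFun K ξ = suppFun Eset ξ := by
    intro ξ
    rw [hEdef, hLdef, aux_suppFun_ellipsoid A hAsymm ξ]
    have h1 : suppFun K ξ ^ 2 = ‖Matrix.toEuclideanLin A ξ‖ ^ 2 := by
      rw [hsupp ξ, ← hnormsq ξ]
    have h2 := hnonneg ξ
    nlinarith [norm_nonneg (Matrix.toEuclideanLin A ξ), h1, h2]
  refine ⟨L, hLbij, ?_⟩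
  apply Set.Subset.antisymm
  · intro x hx
    refine aux_mem_of_inner_le_suppFun hEconv hEcpt.isClosed hEne fun ξ => ?_
    rw [← hsame ξ]
    exact aux_le_suppFun hKcpt hx ξ
  · intro x hx
    refine aux_mem_of_inner_le_suppFun hKconv hKcpt.isClosed hKne fun ξ => ?_
    rw [hsame ξ]
    exact aux_le_suppFun hEcpt hx ξ
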